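/- For all positive integers n and k, Σ_{i=1, i≠k}^∞ 1/(i^{2n}·(k−i)) = H_k/k^{2n} − (2n+1)/k^{2n+1} + Σ_{i=1}^{2n−1} ζ(2n+1−i)/k^i. -/

import Mathlib

open scoped BigOperators

/-- Odd harmonic number `h_k^{(n)} = ∑_{i=1}^k 1/(2i-1)^n`. -/
noncomputable def h (n k : ℕ) : ℝ := ∑ i ∈ Finset.range k, (1 : ℝ) / (2 * (i : ℝ) + 1) ^ n

/-- Generalized harmonic number `H_k^{(n)} = ∑_{i=1}^k 1/i^n`. -/
noncomputable def H (n k : ℕ) : ℝ := ∑ i ∈ Finset.range k, (1 : ℝ) / ((i : ℝ) + 1) ^ n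

/-- Riemann zeta value at a positive integer `m ≥ 2`: `ζ(m) = ∑_{n≥1} 1/n^m`. -/
noncomputable def Z (m : ℕ) : ℝ := ∑' n : ℕ+, (1 : ℝ) / ((n : ℕ) : ℝ) ^ m

open Finset Filter Topology

section Aux

lemma Z_eq (p : ℕ) (hp : 1 ≤ p) : Z p = ∑' j : ℕ, (1 : ℝ) / (j : ℝ) ^ p := by
  refine Function.Injective.tsum_eq (f := fun j : ℕ => (1:ℝ)/(j:ℝ)^p)
    (fun a b h => PNat.coe_injective h) ?_
  intro j hj
  rcases Nat.eq_zero_or_pos j with rfl | hjpos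
  · simp [Function.mem_support, zero_pow (by omega : p ≠ 0)] at hj
  · exact ⟨⟨j, hjpos⟩, rfl⟩

lemma summable_pow (p : ℕ) (hp : 2 ≤ p) : Summable (fun j : ℕ => (1:ℝ)/(j:ℝ)^p) :=
  Real.summable_one_div_nat_pow.mpr (by omega)

lemma hsum_pow (p K : ℕ) (hp : 2 ≤ p) :
    HasSum (fun j : ℕ => if j = K then 0 else (1:ℝ)/(j:ℝ)^p) (Z p - 1/(K:ℝ)^p) := by
  have h1 : HasSum (fun j : ℕ => (1:ℝ)/(j:ℝ)^p) (Z p) := by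
    rw [Z_eq p (by omega)]
    exact (summable_pow p hp).hasSum
  have h2 : HasSum (fun j : ℕ => if j = K then (1:ℝ)/(K:ℝ)^p else 0) (1/(K:ℝ)^p) :=
    hasSum_ite_eq K _
  refine (h1.sub h2).congr_fun fun j => ?_
  by_cases hj : j = K <;> simp [hj]

lemma summable_core (K : ℕ) :
    Summable (fun j : ℕ => if j = K then 0 else (1:ℝ)/((j:ℝ)*((K:ℝ)-(j:ℝ)))) := by
  set f : ℕ → ℝ := fun j => if j = K then 0 else (1:ℝ)/((j:ℝ)*((K:ℝ)-(j:ℝ))) with hf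
  rw [← summable_nat_add_iff (K+1)]
  rw [← summable_abs_iff]
  have hb : Summable (fun j : ℕ => (1:ℝ)/((j:ℝ)+1)^2) := by
    have := Real.summable_one_div_nat_pow.mpr (by norm_num : 1 < 2)
    have := (summable_nat_add_iff 1).mpr this
    refine this.congr fun j => ?_
    push_cast
    ring
  refine Summable.of_nonneg_of_le (fun j => abs_nonneg _) (fun j => ?_) hb
  have hne : j + (K+1) ≠ K := by omega
  simp only [hf, hne, if_false]
  have h1 : ((j + (K+1) : ℕ) : ℝ) = (j:ℝ) + K + 1 := by push_cast; ring
  rw [h1]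
  have h2 : (K:ℝ) - ((j:ℝ) + K + 1) = -((j:ℝ)+1) := by ring
  rw [h2]
  have hpos1 : (0:ℝ) < (j:ℝ) + K + 1 := by positivity
  have hpos2 : (0:ℝ) < (j:ℝ) + 1 := by positivity
  rw [abs_div, abs_one, abs_mul, abs_neg, abs_of_pos hpos1, abs_of_pos hpos2]
  rw [div_le_div_iff₀ (by positivity) (by positivity)]
  nlinarith [sq_nonneg ((j:ℝ)+1)]

lemma g1sum (K M : ℕ) (hK : 0 < K) (hKM : K ≤ M) :
    ∑ j ∈ range M, (if j+1 = K then 0 else (1:ℝ)/((j:ℝ)+1)) = H 1 M - 1/(K:ℝ) := by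
  have step : ∀ j : ℕ, (if j+1 = K then 0 else (1:ℝ)/((j:ℝ)+1))
      = 1/((j:ℝ)+1) - (if j = K-1 then 1/((j:ℝ)+1) else 0) := by
    intro j
    by_cases h : j + 1 = K
    · have : j = K - 1 := by omega
      simp [h, this, show K-1+1=K by omega]
    · have : j ≠ K - 1 := by omega
      simp [h, this]
  rw [sum_congr rfl (fun j _ => step j), sum_sub_distrib, sum_ite_eq']
  have hmem : K - 1 ∈ range M := by simp; omega
  rw [if_pos hmem]
  have hc : ((K - 1 : ℕ) : ℝ) + 1 = (K : ℝ) := by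
    rw [Nat.cast_sub hK]; ring
  rw [hc]
  simp [H, pow_one]

lemma g2sum (K M : ℕ) (hK : 0 < K) (hKM : K ≤ M) :
    ∑ j ∈ range M, (if j+1 = K then 0 else (1:ℝ)/((K:ℝ)-((j:ℝ)+1)))
      = H 1 (K-1) - H 1 (M-K) := by
  obtain ⟨K', rfl⟩ := Nat.exists_eq_succ_of_ne_zero hK.ne'
  rw [range_eq_Ico, ← Finset.sum_Ico_consecutive _ (Nat.zero_le (K'+1)) hKM]
  have h1 : ∑ j ∈ Ico 0 (K'+1), (if j+1 = K'+1 then 0 else (1:ℝ)/(((K'+1:ℕ):ℝ)-((j:ℝ)+1)))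
      = H 1 K' := by
    rw [← range_eq_Ico, ← sum_range_reflect]
    have step : ∀ j ∈ range (K'+1), (if (K'+1-1-j)+1 = K'+1 then 0
        else (1:ℝ)/(((K'+1:ℕ):ℝ)-((((K'+1-1-j:ℕ)):ℝ)+1)))
        = (if j = 0 then 0 else 1/(j:ℝ)) := by
      intro j hj
      simp only [mem_range] at hj
      have hj' : j ≤ K' := by omega
      by_cases h0 : j = 0
      · subst h0; simp
      · have hc1 : K' + 1 - 1 - j + 1 ≠ K' + 1 := by omega
        rw [if_neg hc1, if_neg h0]
        have : ((K'+1-1-j : ℕ) : ℝ) = (K' : ℝ) - j := by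
          have : K'+1-1-j = K' - j := by omega
          rw [this, Nat.cast_sub hj']
        rw [this]
        push_cast
        ring_nf
    rw [sum_congr rfl step, Finset.sum_range_succ']
    simp only [if_pos rfl, add_zero]
    have : ∀ j ∈ range K', (if j+1 = 0 then (0:ℝ) else 1/((j+1:ℕ):ℝ))
        = 1/((j:ℝ)+1)^1 := by
      intro j _
      rw [if_neg (by omega)]
      push_cast; ring
    rw [sum_congr rfl this]
    simp [H]
  have h2 : ∑ j ∈ Ico (K'+1) M, (if j+1 = K'+1 then 0 else (1:ℝ)/(((K'+1:ℕ):ℝ)-((j:ℝ)+1)))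
      = - H 1 (M-(K'+1)) := by
    rw [Finset.sum_Ico_eq_sum_range]
    have step : ∀ i ∈ range (M - (K'+1)), (if (K'+1+i)+1 = K'+1 then 0
        else (1:ℝ)/(((K'+1:ℕ):ℝ)-((((K'+1+i:ℕ)):ℝ)+1))) = -(1/((i:ℝ)+1)^1) := by
      intro i _
      rw [if_neg (by omega)]
      push_cast
      rw [show ((K':ℝ)+1) - ((K'+1+i)+1) = -((i:ℝ)+1) by ring]
      rw [pow_one, one_div, one_div, neg_inv]
    rw [sum_congr rfl step, sum_neg_distrib]
    simp [H]
  rw [h1, h2]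
  have : K' + 1 - 1 = K' := by omega
  rw [this]
  ring

lemma core_partial (K : ℕ) (hK : 0 < K) (M : ℕ) (hM : K ≤ M) :
    ∑ j ∈ range (M+1), (if j = K then 0 else (1:ℝ)/((j:ℝ)*((K:ℝ)-(j:ℝ))))
      = ((H 1 M - 1/(K:ℝ)) + (H 1 (K-1) - H 1 (M-K)))/K := by
  rw [Finset.sum_range_succ']
  have h0 : (if (0:ℕ) = K then (0:ℝ) else 1/(((0:ℕ):ℝ)*((K:ℝ)-((0:ℕ):ℝ)))) = 0 := by
    rw [if_neg (by omega)]; simp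
  rw [h0, add_zero]
  have step : ∀ j : ℕ, (if (j+1:ℕ) = K then (0:ℝ) else 1/(((j+1:ℕ):ℝ)*((K:ℝ)-((j+1:ℕ):ℝ))))
      = (if j+1 = K then 0 else (1:ℝ)/((j:ℝ)+1))/K
        + (if j+1 = K then 0 else (1:ℝ)/((K:ℝ)-((j:ℝ)+1)))/K := by
    intro j
    by_cases h : j + 1 = K
    · simp [h]
    · rw [if_neg h, if_neg h, if_neg h]
      have hK0 : (K:ℝ) ≠ 0 := Nat.cast_ne_zero.mpr hK.ne'
      have hj0 : ((j:ℝ)+1) ≠ 0 := by positivity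
      have hne : (K:ℝ) - ((j:ℝ)+1) ≠ 0 := by
        intro hc
        apply h
        have : (K:ℝ) = (j:ℝ) + 1 := by linarith
        exact_mod_cast this.symm
      push_cast
      field_simp
      ring
  rw [sum_congr rfl (fun j _ => step j), sum_add_distrib, ← sum_div, ← sum_div,
    g1sum K M hK hM, g2sum K M hK hM]
  ring

lemma Hdiff (K M : ℕ) (hKM : K ≤ M) :
    H 1 M - H 1 (M-K) = ∑ t ∈ range K, (1:ℝ)/(((M-K+t:ℕ):ℝ)+1) := by
  obtain ⟨L, rfl⟩ : ∃ L, M = L + K := ⟨M - K, by omega⟩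
  have hLK : L + K - K = L := by omega
  rw [hLK]
  unfold H
  rw [Finset.sum_range_add]
  have : ∀ t ∈ range K, (1:ℝ)/(((L+t:ℕ):ℝ)+1)^1 = (1:ℝ)/(((L+K-K+t:ℕ):ℝ)+1) := by
    intro t _
    rw [pow_one]
    congr 3
    omega
  rw [sum_congr rfl this]
  simp only [hLK]
  ring

lemma core_hasSum (K : ℕ) (hK : 0 < K) :
    HasSum (fun j : ℕ => if j = K then 0 else (1:ℝ)/((j:ℝ)*((K:ℝ)-(j:ℝ))))
      ((H 1 K - 2/(K:ℝ))/(K:ℝ)) := by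
  have hs := summable_core K
  rw [hs.hasSum_iff_tendsto_nat]
  have hHK : H 1 K = H 1 (K-1) + 1/(K:ℝ) := by
    obtain ⟨K', rfl⟩ := Nat.exists_eq_succ_of_ne_zero hK.ne'
    unfold H
    rw [Finset.sum_range_succ]
    simp [pow_one]
  have htend : Tendsto (fun N : ℕ =>
      ((∑ t ∈ range K, (1:ℝ)/(((N-1-K+t:ℕ):ℝ)+1)) + (H 1 (K-1) - 1/(K:ℝ)))/(K:ℝ))
      atTop (𝓝 ((0 + (H 1 (K-1) - 1/(K:ℝ)))/(K:ℝ))) := by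
    refine Tendsto.div_const ?_ _
    refine Tendsto.add_const _ ?_
    have h0 : Tendsto (fun m : ℕ => (1:ℝ)/((m:ℝ)+1)) atTop (𝓝 0) :=
      tendsto_one_div_add_atTop_nhds_zero_nat
    have : Tendsto (fun N : ℕ => ∑ t ∈ range K, (1:ℝ)/(((N-1-K+t:ℕ):ℝ)+1))
        atTop (𝓝 (∑ t ∈ range K, (0:ℝ))) := by
      refine tendsto_finset_sum _ fun t _ => ?_
      have harg : Tendsto (fun N : ℕ => N - 1 - K + t) atTop atTop := by
        have h1 : Tendsto (fun N : ℕ => N - (1 + K)) atTop atTop :=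
          tendsto_sub_atTop_nat (1+K)
        have h2 : Tendsto (fun m : ℕ => m + t) atTop atTop :=
          tendsto_add_atTop_nat t
        have := h2.comp h1
        refine this.congr fun N => ?_
        simp only [Function.comp]
        omega
      exact h0.comp harg
    simpa using this
  have hval : ((0 + (H 1 (K-1) - 1/(K:ℝ)))/(K:ℝ)) = (H 1 K - 2/(K:ℝ))/(K:ℝ) := by
    rw [hHK]; ring
  rw [hval] at htend
  refine Tendsto.congr' ?_ htend
  filter_upwards [eventually_ge_atTop (K+1)] with N hN
  have hM : K ≤ N - 1 := by omega
  have hN1 : N = (N-1) + 1 := by omega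
  have hc := core_partial K hK (N-1) hM
  rw [← hN1] at hc
  rw [hc, ← Hdiff K (N-1) hM]
  ring

lemma pf (m : ℕ) (hm : 2 ≤ m) (x y : ℝ) (hx : x ≠ 0) (hy : y ≠ 0) (hxy : x ≠ y) :
    1/(y^m * (x-y)) = (∑ t ∈ range (m-1), 1/(x^(t+1) * y^(m-t))) + 1/(x^(m-1) * y * (x-y)) := by
  have hsub : x - y ≠ 0 := sub_ne_zero.mpr hxy
  have hterm : ∀ t ∈ range (m-1),
      (1:ℝ)/(x^(t+1) * y^(m-t)) = (x^(m-1-1-t) * y^t) * (1/(x^(m-1) * y^m)) := by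
    intro t ht
    simp only [mem_range] at ht
    have e1 : x^(t+1) * x^(m-1-1-t) = x^(m-1) := by
      rw [← pow_add]; congr 1; omega
    have e2 : y^(m-t) * y^t = y^m := by
      rw [← pow_add]; congr 1; omega
    rw [mul_one_div, div_eq_div_iff (by positivity) (by positivity), ← e1, ← e2]
    ring
  rw [sum_congr rfl hterm, ← Finset.sum_mul]
  have hre : ∑ t ∈ range (m-1), x^(m-1-1-t) * y^t
      = ∑ t ∈ range (m-1), x^t * y^(m-1-1-t) := by
    rw [← sum_range_reflect (fun i => x^i * y^(m-1-1-i)) (m-1)]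
    refine sum_congr rfl fun j hj => ?_
    simp only [mem_range] at hj
    congr 2
    omega
  have hgeom : (∑ t ∈ range (m-1), x^t * y^(m-1-1-t)) = (x^(m-1) - y^(m-1))/(x-y) := by
    rw [eq_div_iff hsub]
    exact geom_sum₂_mul x y (m-1)
  rw [hre, hgeom]
  have hxm : x^(m-1) ≠ 0 := pow_ne_zero _ hx
  have hym : y^m ≠ 0 := pow_ne_zero _ hy
  have hyy : y^m = y^(m-1) * y := by rw [← pow_succ]; congr 1; omega
  field_simp
  rw [hyy]
  ring

end Aux

theorem stmt9 (n k : ℕ+) :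
    (∑' i : {i : ℕ+ // i ≠ k}, (1 : ℝ) / ((((i : ℕ+) : ℕ) : ℝ) ^ (2 * (n : ℕ)) * (((k : ℕ) : ℝ) - (((i : ℕ+) : ℕ) : ℝ))))
      = H 1 (k : ℕ) / ((k : ℕ) : ℝ) ^ (2 * (n : ℕ)) - (2 * ((n : ℕ) : ℝ) + 1) / ((k : ℕ) : ℝ) ^ (2 * (n : ℕ) + 1)
        + ∑ i ∈ Finset.Icc 1 (2 * (n : ℕ) - 1), Z (2 * (n : ℕ) + 1 - i) / ((k : ℕ) : ℝ) ^ i := by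
  set m : ℕ := 2 * (n : ℕ) with hm_def
  set K : ℕ := (k : ℕ) with hK_def
  have hm : 2 ≤ m := by have h1 : 1 ≤ (n:ℕ) := n.2; omega
  have hK : 0 < K := k.2
  have hKR : (K:ℝ) ≠ 0 := Nat.cast_ne_zero.mpr hK.ne'
  set F : ℕ → ℝ := fun j => if j = K then 0 else 1/((j:ℝ)^m * ((K:ℝ) - (j:ℝ))) with hF_def
  -- Step 1: rewrite LHS as a tsum over ℕ
  have step1 : (∑' i : {i : ℕ+ // i ≠ k},
      (1 : ℝ) / ((((i : ℕ+) : ℕ) : ℝ) ^ m * ((K : ℝ) - (((i : ℕ+) : ℕ) : ℝ))))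
      = ∑' j : ℕ, F j := by
    have h0 : ∀ i : {i : ℕ+ // i ≠ k},
        (1 : ℝ) / ((((i : ℕ+) : ℕ) : ℝ) ^ m * ((K : ℝ) - (((i : ℕ+) : ℕ) : ℝ)))
        = F (((i : ℕ+) : ℕ)) := by
      intro i
      have hne : ((i.1 : ℕ+) : ℕ) ≠ K := by
        intro hc
        exact i.2 (PNat.coe_injective hc)
      simp only [hF_def, if_neg hne]
    rw [tsum_congr h0]
    refine Function.Injective.tsum_eq (g := fun i : {i : ℕ+ // i ≠ k} => ((i.1 : ℕ+) : ℕ))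
      (fun a b hab => Subtype.ext (PNat.coe_injective hab)) ?_
    intro j hj
    simp only [Function.mem_support, hF_def] at hj
    have hjK : j ≠ K := by
      intro hc; apply hj; rw [if_pos hc]
    have hj0 : j ≠ 0 := by
      intro hc
      apply hj
      rw [if_neg hjK, hc]
      simp [zero_pow (by omega : m ≠ 0)]
    exact ⟨⟨⟨j, Nat.pos_of_ne_zero hj0⟩, fun hc => hjK (by
      simpa [hK_def] using congrArg (fun x : ℕ+ => (x : ℕ)) hc)⟩, rfl⟩
  -- Step 2: HasSum F total
  set total : ℝ := (∑ t ∈ range (m-1), (1/(K:ℝ)^(t+1)) * (Z (m-t) - 1/(K:ℝ)^(m-t)))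
      + (1/(K:ℝ)^(m-1)) * ((H 1 K - 2/(K:ℝ))/(K:ℝ)) with htotal_def
  have hG : ∀ t ∈ range (m-1),
      HasSum (fun j : ℕ => (1/(K:ℝ)^(t+1)) * (if j = K then 0 else (1:ℝ)/(j:ℝ)^(m-t)))
        ((1/(K:ℝ)^(t+1)) * (Z (m-t) - 1/(K:ℝ)^(m-t))) := by
    intro t ht
    simp only [mem_range] at ht
    exact (hsum_pow (m-t) K (by omega)).mul_left _
  have hHH : HasSum (fun j : ℕ =>
      (1/(K:ℝ)^(m-1)) * (if j = K then 0 else (1:ℝ)/((j:ℝ)*((K:ℝ)-(j:ℝ)))))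
      ((1/(K:ℝ)^(m-1)) * ((H 1 K - 2/(K:ℝ))/(K:ℝ))) :=
    (core_hasSum K hK).mul_left _
  have hFsum : HasSum F total := by
    refine ((hasSum_sum hG).add hHH).congr_fun fun j => ?_
    by_cases hj : j = K
    · simp [hF_def, hj]
    · simp only [hF_def, if_neg hj]
      rcases Nat.eq_zero_or_pos j with rfl | hjpos
      · have hz : ∀ t ∈ range (m-1),
            (1/(K:ℝ)^(t+1)) * (1/((0:ℕ):ℝ)^(m-t)) = 0 := by
          intro t ht
          simp only [mem_range] at ht
          rw [Nat.cast_zero, zero_pow (by omega : m - t ≠ 0)]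
          simp
        rw [sum_congr rfl hz]
        simp [zero_pow (by omega : m ≠ 0)]
      · have hy : ((j:ℝ)) ≠ 0 := Nat.cast_ne_zero.mpr hjpos.ne'
        have hxy : (K:ℝ) ≠ (j:ℝ) := by
          intro hc; exact hj (Nat.cast_injective hc).symm
        have := pf m hm (K:ℝ) (j:ℝ) hKR hy hxy
        rw [this]
        congr 1
        · refine sum_congr rfl fun t _ => ?_
          simp only [one_div, mul_inv] <;> ring
        · simp only [one_div, mul_inv] <;> ring
  rw [step1, hFsum.tsum_eq, htotal_def]
  -- Step 3: final algebra
  have hsplit : ∀ t ∈ range (m-1),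
      (1/(K:ℝ)^(t+1)) * (Z (m-t) - 1/(K:ℝ)^(m-t))
        = (1/(K:ℝ)^(t+1)) * Z (m-t) - 1/(K:ℝ)^(m+1) := by
    intro t ht
    simp only [mem_range] at ht
    have : (K:ℝ)^(t+1) * (K:ℝ)^(m-t) = (K:ℝ)^(m+1) := by
      rw [← pow_add]; congr 1; omega
    rw [mul_sub, one_div_mul_one_div, this]
  rw [sum_congr rfl hsplit, sum_sub_distrib, sum_const, card_range]
  have hA : ∑ t ∈ range (m-1), (1/(K:ℝ)^(t+1)) * Z (m-t)
      = ∑ i ∈ Finset.Icc 1 (m-1), Z (m+1-i)/(K:ℝ)^i := by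
    rw [show Finset.Icc 1 (m-1) = Finset.Ico 1 m by
      rw [← Finset.Ico_add_one_right_eq_Icc]; congr 1; omega]
    rw [Finset.sum_Ico_eq_sum_range]
    rw [show m - 1 = m - 1 from rfl]
    refine sum_congr rfl fun t ht => ?_
    simp only [mem_range] at ht
    rw [show m + 1 - (1 + t) = m - t by omega, show 1 + t = t + 1 by omega,
      mul_comm, mul_one_div]
  rw [hA]
  have hcast : ((m - 1 : ℕ) : ℝ) = (m:ℝ) - 1 := by
    rw [Nat.cast_sub (by omega)]; simp
  have hpow1 : (K:ℝ)^(m-1) * (K:ℝ) = (K:ℝ)^m := by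
    rw [← pow_succ]; congr 1; omega
  have hpow2 : (K:ℝ)^m * (K:ℝ) = (K:ℝ)^(m+1) := by
    rw [← pow_succ]
  have h2n : (2 * ((n:ℕ):ℝ) + 1) = (m:ℝ) + 1 := by
    rw [hm_def]; push_cast; ring
  rw [h2n]
  have hKm : (K:ℝ)^m ≠ 0 := pow_ne_zero _ hKR
  have hKm1 : (K:ℝ)^(m-1) ≠ 0 := pow_ne_zero _ hKR
  have hKm2 : (K:ℝ)^(m+1) ≠ 0 := pow_ne_zero _ hKR
  rw [nsmul_eq_mul, hcast]
  field_simp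
  rw [← hpow1, ← hpow2, ← hpow1]
  ring
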